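/- arXiv:1406.0940 — 4 statements merged into one kernel-verified Lean document; each statement's English description precedes it below -/
import Mathlib

section
/- If a graph G is the competition graph of a d-partial order, then G is also the competition graph of a (d+1)-partial order. -/
/-- `x ≺ y` componentwise strictly. -/
def prec {d : ℕ} (x y : Fin d → ℝ) : Prop := ∀ i, x i < y i

/-- The competition graph of the digraph with arc relation `A`. -/
def competition {V : Type*} (A : V → V → Prop) : SimpleGraph V where
  Adj u v := u ≠ v ∧ ∃ w, A u w ∧ A v w
  symm := by
    constructor
    intro u v h
    exact ⟨h.1.symm, h.2.imp fun w hw => ⟨hw.2, hw.1⟩⟩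
  loopless := by
    constructor
    intro u h
    exact h.1 rfl

/-- The competition graph of the `d`-partial order `D_S`. -/
def compS {d : ℕ} (S : Finset (Fin d → ℝ)) : SimpleGraph S :=
  competition fun x v => prec v.1 x.1

/-- `G` together with `k` added isolated vertices. -/
def addIsolated {V : Type*} (G : SimpleGraph V) (k : ℕ) : SimpleGraph (V ⊕ Fin k) where
  Adj u v := ∃ a b, G.Adj a b ∧ u = Sum.inl a ∧ v = Sum.inl b
  symm := by
    constructor
    rintro u v ⟨a, b, hab, rfl, rfl⟩
    exact ⟨b, a, hab.symm, rfl, rfl⟩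
  loopless := by
    constructor
    rintro u ⟨a, b, hab, rfl, h⟩
    exact hab.ne (Sum.inl.inj h)

/-- `dim_poc G ≤ d`. -/
def pocDimLE {V : Type*} [Fintype V] (G : SimpleGraph V) (d : ℕ) : Prop :=
  ∃ k : ℕ, ∃ S : Finset (Fin d → ℝ), Nonempty (compS S ≃g addIsolated G k)

/-- The partial order competition dimension of `G`. -/
noncomputable def pocDim {V : Type*} [Fintype V] (G : SimpleGraph V) : ℕ :=
  sInf {d | pocDimLE G d}

/-- If `G` is the competition graph of a `d`-partial order, then `G` is the
competition graph of a `(d+1)`-partial order. -/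
theorem stmt9 {V : Type*} (G : SimpleGraph V) (d : ℕ)
    (S : Finset (Fin d → ℝ)) (h : Nonempty (compS S ≃g G)) :
    ∃ T : Finset (Fin (d + 1) → ℝ), Nonempty (compS T ≃g G) := by
  classical
  obtain ⟨φ⟩ := h
  set f : (Fin d → ℝ) → (Fin (d+1) → ℝ) := fun x => Fin.snoc x (∑ i, x i) with hf
  have hinj : Function.Injective f := by
    intro x y hxy
    funext i
    have := congrFun hxy (Fin.castSucc i)
    simpa [hf, Fin.snoc_castSucc] using this
  refine ⟨S.image f, ?_⟩
  have hbij : Function.Bijective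
      (fun x : {x // x ∈ S} => (⟨f x.1, Finset.mem_image_of_mem f x.2⟩ :
        {y // y ∈ S.image f})) := by
    constructor
    · intro a b hab
      exact Subtype.ext (hinj (congrArg Subtype.val hab))
    · rintro ⟨y, hy⟩
      obtain ⟨z, hz, rfl⟩ := Finset.mem_image.mp hy
      exact ⟨⟨z, hz⟩, rfl⟩
  let e := Equiv.ofBijective _ hbij
  have hadj : ∀ x y : {x // x ∈ S},
      (compS (S.image f)).Adj (e x) (e y) ↔ (compS S).Adj x y := by
    intro x y
    constructor
    · rintro ⟨hne, ⟨w, hw⟩, h1, h2⟩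
      obtain ⟨z, hz, rfl⟩ := Finset.mem_image.mp hw
      have hex : ∀ a : {x // x ∈ S}, ((e a : {y // y ∈ S.image f}) : Fin (d+1) → ℝ) = f a.1 :=
        fun _ => rfl
      refine ⟨fun hxy => hne (congrArg e hxy), ⟨z, hz⟩, ?_, ?_⟩
      · intro i
        have := h1 (Fin.castSucc i)
        simpa [hex, hf, Fin.snoc_castSucc] using this
      · intro i
        have := h2 (Fin.castSucc i)
        simpa [hex, hf, Fin.snoc_castSucc] using this
    · rintro ⟨hne, ⟨z, hz⟩, h1, h2⟩
      rcases Nat.eq_zero_or_pos d with hd | hd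
      · exfalso
        subst hd
        exact hne (Subtype.ext (Subsingleton.elim x.1 y.1))
      · have hne' : Nonempty (Fin d) := ⟨⟨0, hd⟩⟩
        have hex : ∀ a : {x // x ∈ S}, ((e a : {y // y ∈ S.image f}) : Fin (d+1) → ℝ) = f a.1 :=
          fun _ => rfl
        refine ⟨fun hxy => hne (e.injective hxy), ?_⟩
        refine ⟨⟨f z, Finset.mem_image_of_mem f hz⟩, ?_, ?_⟩
        · intro i
          refine Fin.lastCases ?_ ?_ i
          · simp only [hex, hf, Fin.snoc_last]
            exact Finset.sum_lt_sum_of_nonempty Finset.univ_nonempty (fun i _ => h1 i)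
          · intro j
            simp only [hex, hf, Fin.snoc_castSucc]
            exact h1 j
        · intro i
          refine Fin.lastCases ?_ ?_ i
          · simp only [hex, hf, Fin.snoc_last]
            exact Finset.sum_lt_sum_of_nonempty Finset.univ_nonempty (fun i _ => h2 i)
          · intro j
            simp only [hex, hf, Fin.snoc_castSucc]
            exact h2 j
  let ψ : compS S ≃g compS (S.image f) := ⟨e, by intro a b; exact hadj a b⟩
  exact ⟨ψ.symm.trans φ⟩
end

section
/- For every finite graph G, there exist a positive integer d, a nonnegative integer k, and a finite set S ⊆ ℝ^d such that the competition graph of D_S is isomorphic to the disjoint union of G and k isolated vertices; moreover one can take d = |V(G)| and k = |E(G)|. -/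
set_option linter.unusedSectionVars false

section Aux

variable {V : Type*} [Fintype V] [DecidableEq V]

/-- Point for a vertex. -/
noncomputable def pvec (v : V) : Fin (Fintype.card V) → ℝ :=
  fun i => if i = Fintype.equivFin V v then 0 else 1

/-- Point for an edge. -/
noncomputable def qvec (e : Sym2 V) : Fin (Fintype.card V) → ℝ :=
  fun i => if (Fintype.equivFin V).symm i ∈ e then -1 else 0

lemma pvec_inj : Function.Injective (pvec (V := V)) := by
  intro u v h
  have := congrFun h (Fintype.equivFin V v)
  simp only [pvec, if_pos rfl] at this
  by_contra hne
  rw [if_neg (by simpa using fun hc => hne ((Fintype.equivFin V).injective hc).symm)] at this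
  norm_num at this

lemma prec_qvec_pvec {e : Sym2 V} {v : V} : prec (qvec e) (pvec v) ↔ v ∈ e := by
  constructor
  · intro h
    have := h (Fintype.equivFin V v)
    simp only [qvec, pvec, if_pos rfl, Equiv.symm_apply_apply] at this
    by_contra hv
    rw [if_neg hv] at this; norm_num at this
  · intro hv i
    simp only [qvec, pvec]
    by_cases hi : i = Fintype.equivFin V v
    · subst hi
      rw [if_pos rfl, if_pos (by simpa using hv)]; norm_num
    · rw [if_neg hi]
      split <;> norm_num

lemma not_prec_pvec_pvec (u v : V) : ¬ prec (pvec u) (pvec v) := by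
  intro h
  have := h (Fintype.equivFin V v)
  simp only [pvec, if_pos rfl] at this
  split at this <;> norm_num at this

lemma not_prec_pvec_qvec (v : V) (e : Sym2 V) : ¬ prec (pvec v) (qvec e) := by
  induction e with
  | _ a b =>
    intro h
    have := h (Fintype.equivFin V a)
    simp only [pvec, qvec, Equiv.symm_apply_apply] at this
    rw [if_pos (Sym2.mem_mk_left a b)] at this
    split at this <;> norm_num at this

lemma not_prec_qvec_qvec (e e' : Sym2 V) : ¬ prec (qvec e) (qvec e') := by
  induction e' with
  | _ a b =>
    intro h
    have := h (Fintype.equivFin V a)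
    simp only [qvec, Equiv.symm_apply_apply] at this
    rw [if_pos (Sym2.mem_mk_left a b)] at this
    split at this <;> norm_num at this

lemma pvec_ne_qvec (v : V) (e : Sym2 V) : pvec v ≠ qvec e := by
  induction e with
  | _ a b =>
    intro h
    have := congrFun h (Fintype.equivFin V a)
    simp only [pvec, qvec, Equiv.symm_apply_apply] at this
    rw [if_pos (Sym2.mem_mk_left a b)] at this
    split at this <;> norm_num at this

lemma mem_of_qvec_eq {e e' : Sym2 V} (h : qvec e = qvec e') {a : V} (ha : a ∈ e) : a ∈ e' := by
  have := congrFun h (Fintype.equivFin V a)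
  simp only [qvec, Equiv.symm_apply_apply, if_pos ha] at this
  by_contra hc
  rw [if_neg hc] at this
  norm_num at this

end Aux

section Main

variable {V : Type*} [Fintype V] [DecidableEq V] (G : SimpleGraph V) [DecidableRel G.Adj]

noncomputable def edgeEquiv : Fin G.edgeFinset.card ≃ G.edgeFinset :=
  (Fintype.equivFinOfCardEq (Fintype.card_coe _)).symm

noncomputable def fmap : V ⊕ Fin G.edgeFinset.card → (Fin (Fintype.card V) → ℝ) :=
  Sum.elim pvec (fun j => qvec ((edgeEquiv G j : Sym2 V)))

lemma qvec_inj_edges {e e' : Sym2 V} (he : e ∈ G.edgeFinset)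
    (h : qvec e = qvec e') : e = e' := by
  have hnd : ¬ e.IsDiag := by
    rw [SimpleGraph.mem_edgeFinset] at he
    exact G.not_isDiag_of_mem_edgeSet he
  induction e with
  | _ a b =>
    have hab : a ≠ b := by simpa [Sym2.mk_isDiag_iff] using hnd
    exact Sym2.eq_of_ne_mem hab (Sym2.mem_mk_left a b) (Sym2.mem_mk_right a b)
      (mem_of_qvec_eq h (Sym2.mem_mk_left a b))
      (mem_of_qvec_eq h (Sym2.mem_mk_right a b))

lemma fmap_inj : Function.Injective (fmap G) := by
  rintro (u | j) (v | j') h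
  · exact congrArg Sum.inl (pvec_inj h)
  · exact absurd h (pvec_ne_qvec _ _)
  · exact absurd h.symm (pvec_ne_qvec _ _)
  · refine congrArg Sum.inr ?_
    have := qvec_inj_edges G (edgeEquiv G j).2 h
    have : (edgeEquiv G j) = (edgeEquiv G j') := Subtype.ext this
    exact (edgeEquiv G).injective this

lemma main_adj (a b : V ⊕ Fin G.edgeFinset.card) :
    (a ≠ b ∧ ∃ c, prec (fmap G c) (fmap G a) ∧ prec (fmap G c) (fmap G b)) ↔
    (addIsolated G G.edgeFinset.card).Adj a b := by
  constructor
  · rintro ⟨hab, (w | j), hwa, hwb⟩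
    · rcases a with u | j
      · exact absurd hwa (not_prec_pvec_pvec _ _)
      · exact absurd hwa (not_prec_pvec_qvec _ _)
    · rcases a with u | ja
      · rcases b with v | jb
        · have hu : u ∈ (edgeEquiv G j : Sym2 V) := prec_qvec_pvec.mp hwa
          have hv : v ∈ (edgeEquiv G j : Sym2 V) := prec_qvec_pvec.mp hwb
          have huv : u ≠ v := fun hc => hab (by rw [hc])
          have he : (edgeEquiv G j : Sym2 V) = s(u, v) :=
            (Sym2.mem_and_mem_iff huv).mp ⟨hu, hv⟩
          have : s(u, v) ∈ G.edgeFinset := he ▸ (edgeEquiv G j).2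
          rw [SimpleGraph.mem_edgeFinset, SimpleGraph.mem_edgeSet] at this
          exact ⟨u, v, this, rfl, rfl⟩
        · exact absurd hwb (not_prec_qvec_qvec _ _)
      · exact absurd hwa (not_prec_qvec_qvec _ _)
  · rintro ⟨u, v, huv, rfl, rfl⟩
    have he : s(u, v) ∈ G.edgeFinset := by
      rw [SimpleGraph.mem_edgeFinset, SimpleGraph.mem_edgeSet]; exact huv
    refine ⟨fun hc => huv.ne (Sum.inl.inj hc), Sum.inr ((edgeEquiv G).symm ⟨_, he⟩), ?_, ?_⟩
    · show prec (qvec _) (pvec u)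
      rw [Equiv.apply_symm_apply]
      exact prec_qvec_pvec.mpr (Sym2.mem_mk_left u v)
    · show prec (qvec _) (pvec v)
      rw [Equiv.apply_symm_apply]
      exact prec_qvec_pvec.mpr (Sym2.mem_mk_right u v)

end Main

/-- Every finite graph together with `|E(G)|` isolated vertices is the
competition graph of an `|V(G)|`-partial order. -/
theorem stmt11 {V : Type*} [Fintype V] [DecidableEq V] (G : SimpleGraph V)
    [DecidableRel G.Adj] :
    ∃ S : Finset (Fin (Fintype.card V) → ℝ),
      Nonempty (compS S ≃g addIsolated G G.edgeFinset.card) := by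
  classical
  set k := G.edgeFinset.card
  set S : Finset (Fin (Fintype.card V) → ℝ) := Finset.univ.image (fmap G) with hS
  refine ⟨S, ⟨?_⟩⟩
  have hmem : ∀ a, fmap G a ∈ S := fun a => Finset.mem_image_of_mem _ (Finset.mem_univ a)
  let g : V ⊕ Fin k → S := fun a => ⟨fmap G a, hmem a⟩
  have hbij : Function.Bijective g := by
    constructor
    · intro a b h
      exact fmap_inj G (Subtype.ext_iff.mp h)
    · rintro ⟨x, hx⟩
      rw [hS, Finset.mem_image] at hx
      obtain ⟨a, -, rfl⟩ := hx
      exact ⟨a, rfl⟩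
  let E := Equiv.ofBijective g hbij
  refine ⟨E.symm, ?_⟩
  intro s t
  obtain ⟨a, rfl⟩ := E.surjective s
  obtain ⟨b, rfl⟩ := E.surjective t
  rw [Equiv.symm_apply_apply, Equiv.symm_apply_apply]
  show (addIsolated G k).Adj a b ↔ (compS S).Adj (g a) (g b)
  rw [← main_adj G a b]
  show _ ↔ (g a ≠ g b ∧ ∃ w : S, prec w.1 (fmap G a) ∧ prec w.1 (fmap G b))
  constructor
  · rintro ⟨hab, c, hc⟩
    exact ⟨fun h => hab (hbij.1 h), ⟨fmap G c, hmem c⟩, hc⟩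
  · rintro ⟨hab, ⟨x, hx⟩, hxa, hxb⟩
    rw [hS, Finset.mem_image] at hx
    obtain ⟨c, -, rfl⟩ := hx
    exact ⟨fun h => hab (by rw [h]), c, hxa, hxb⟩
end

section
/- Let D be a finite transitive acyclic digraph with competition graph G. Then for every vertex u that is non-isolated in G, there exists a vertex v that is isolated in G such that (u,v) is an arc of D. -/
/-- In a finite transitive acyclic digraph, every vertex non-isolated in the
competition graph has an arc to a vertex isolated in the competition graph. -/
theorem stmt14 {V : Type*} [Fintype V] (A : V → V → Prop)
    (htrans : ∀ a b c, A a b → A b c → A a c)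
    (hacyc : ∀ a, ¬ Relation.TransGen A a a)
    (u : V) (hu : ∃ w, (competition A).Adj u w) :
    ∃ v, (∀ w, ¬ (competition A).Adj v w) ∧ A u v := by
  classical
  -- flip A is transitive and irreflexive, hence well-founded on a finite type
  have hirrefl : ∀ a, ¬ A a a := fun a ha => hacyc a (Relation.TransGen.single ha)
  have : IsTrans V (flip A) := ⟨fun a b c hab hbc => htrans c b a hbc hab⟩
  have : IsIrrefl V (flip A) := ⟨fun a => hirrefl a⟩
  have hwf : WellFounded (flip A) := Finite.wellFounded_of_trans_of_irrefl _
  -- the set of out-neighbors of u is nonempty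
  obtain ⟨w, hw⟩ := hu
  obtain ⟨hne, x, hux, hwx⟩ := hw
  have hS : x ∈ {y | A u y} := hux
  obtain ⟨v, hv, hmin⟩ := hwf.has_min {y | A u y} ⟨x, hS⟩
  refine ⟨v, ?_, hv⟩
  rintro z ⟨hnz, y, hvy, hzy⟩
  exact hmin y (htrans u v y hv hvy) hvy
end

section
/- If H is an induced subgraph of a finite graph G, then dim_poc(H) ≤ dim_poc(G). -/
lemma prec_trans {d : ℕ} {x y z : Fin d → ℝ} (h1 : prec x y) (h2 : prec y z) : prec x z :=
  fun i => (h1 i).trans (h2 i)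

lemma compS_adj {d : ℕ} (S : Finset (Fin d → ℝ)) (a b : S) :
    (compS S).Adj a b ↔ a ≠ b ∧ ∃ w : S, prec w.1 a.1 ∧ prec w.1 b.1 := Iff.rfl

lemma addIsolated_adj_inl_inl {V : Type*} (G : SimpleGraph V) (k : ℕ) (a b : V) :
    (addIsolated G k).Adj (Sum.inl a) (Sum.inl b) ↔ G.Adj a b := by
  constructor
  · rintro ⟨x, y, h, hx, hy⟩
    obtain rfl := Sum.inl.inj hx
    obtain rfl := Sum.inl.inj hy
    exact h
  · intro h; exact ⟨a, b, h, rfl, rfl⟩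

lemma addIsolated_adj_inr {V : Type*} (G : SimpleGraph V) (k : ℕ) (j : Fin k)
    (x : V ⊕ Fin k) : ¬ (addIsolated G k).Adj (Sum.inr j) x := by
  rintro ⟨a, b, h, hx, hy⟩
  cases hx

lemma exists_min {d : ℕ} (hd : 0 < d) (S : Finset (Fin d → ℝ)) {w : Fin d → ℝ} (hw : w ∈ S) :
    ∃ m ∈ S, (m = w ∨ prec m w) ∧ ∀ y ∈ S, ¬ prec y m := by
  classical
  set T := S.filter (fun y => y = w ∨ prec y w) with hT
  have hwT : w ∈ T := Finset.mem_filter.mpr ⟨hw, Or.inl rfl⟩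
  obtain ⟨m, hmT, hmin⟩ : ∃ m ∈ T, ∀ x ∈ T, ¬x < m := by
    obtain ⟨m, hm⟩ := Finset.exists_minimal (s := T) ⟨w, hwT⟩
    exact ⟨m, hm.1, fun x hx hlt => hm.not_prop_of_lt hlt hx⟩
  obtain ⟨hmS, hmw⟩ := Finset.mem_filter.mp hmT
  refine ⟨m, hmS, hmw, ?_⟩
  intro y hy hym
  have hle : y ≤ m := fun i => (hym i).le
  have hne : y ≠ m := by
    intro h
    exact lt_irrefl _ (h ▸ hym ⟨0, hd⟩)
  have hylt : y < m := lt_of_le_of_ne hle hne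
  have hyT : y ∈ T := Finset.mem_filter.mpr ⟨hy, Or.inr (by
    rcases hmw with rfl | h
    · exact hym
    · exact prec_trans hym h)⟩
  exact hmin y hyT hylt

noncomputable def addIsolated_iso {V W : Type*} {G : SimpleGraph V} {H : SimpleGraph W}
    (φ : G ≃g H) (k : ℕ) : addIsolated G k ≃g addIsolated H k := by
  refine ⟨Equiv.sumCongr φ.toEquiv (Equiv.refl (Fin k)), ?_⟩
  rintro (x | j) (y | j') <;>
    simp only [Equiv.sumCongr_apply, Sum.map_inl, Sum.map_inr, Equiv.refl_apply]
  · rw [addIsolated_adj_inl_inl, addIsolated_adj_inl_inl]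
    exact φ.map_rel_iff
  · constructor
    · rintro ⟨a, b, h, hx, hy⟩; cases hy
    · rintro ⟨a, b, h, hx, hy⟩; cases hy
  · constructor
    · rintro ⟨a, b, h, hx, hy⟩; cases hx
    · rintro ⟨a, b, h, hx, hy⟩; cases hx
  · constructor
    · rintro ⟨a, b, h, hx, hy⟩; cases hx
    · rintro ⟨a, b, h, hx, hy⟩; cases hx

lemma pocDimLE_of_iso {V W : Type*} [Fintype V] [Fintype W] {G : SimpleGraph V}
    {H : SimpleGraph W} (φ : G ≃g H) {d : ℕ} (h : pocDimLE G d) : pocDimLE H d := by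
  obtain ⟨k, S, ⟨e⟩⟩ := h
  exact ⟨k, S, ⟨e.trans (addIsolated_iso φ k)⟩⟩

lemma key {V : Type*} [Fintype V] (G : SimpleGraph V) (s : Set V) [Fintype s]
    {d : ℕ} (h : pocDimLE G d) : pocDimLE (SimpleGraph.induce s G) d := by
  classical
  obtain ⟨k, S, ⟨e⟩⟩ := h
  -- keep a point iff its vertex is in `s`, or it has empty down-set
  set keep : {x // x ∈ S} → Prop :=
    fun v => (∃ a : s, e v = Sum.inl ↑a) ∨ (∀ z ∈ S, ¬ prec z v.1) with hkeepdef
  set S' : Finset (Fin d → ℝ) := S.filter (fun p => ∃ h : p ∈ S, keep ⟨p, h⟩) with hS'def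
  have hS'S : ∀ {p : Fin d → ℝ}, p ∈ S' → p ∈ S := fun hp => (Finset.mem_filter.mp hp).1
  have hmemS' : ∀ (v : {x // x ∈ S}), keep v → v.1 ∈ S' :=
    fun v hv => Finset.mem_filter.mpr ⟨v.2, v.2, hv⟩
  have hS'keep : ∀ {p : Fin d → ℝ} (hp : p ∈ S'), keep ⟨p, hS'S hp⟩ := by
    intro p hp
    obtain ⟨h', hk⟩ := (Finset.mem_filter.mp hp).2
    exact hk
  let A := {v : {x // x ∈ S} // keep v}
  let e0 : {x // x ∈ S'} ≃ A :=
    { toFun := fun p => ⟨⟨p.1, hS'S p.2⟩, hS'keep p.2⟩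
      invFun := fun v => ⟨v.1.1, hmemS' v.1 v.2⟩
      left_inv := fun p => rfl
      right_inv := fun v => rfl }
  -- adjacency in `compS S'` is adjacency in `compS S`
  have L1 : ∀ (a b : {x // x ∈ S'}),
      (compS S').Adj a b ↔ (compS S).Adj (e0 a).1 (e0 b).1 := by
    intro a b
    rw [compS_adj, compS_adj]
    constructor
    · rintro ⟨hne, w, hwa, hwb⟩
      refine ⟨?_, ⟨w.1, hS'S w.2⟩, hwa, hwb⟩
      intro hcon
      exact hne (Subtype.ext (congrArg (fun z : {x // x ∈ S} => z.1) hcon))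
    · rintro ⟨hne, w, hwa, hwb⟩
      have hd : 0 < d := by
        by_contra hd0
        have hz : a.1 = b.1 := funext fun i => absurd i.2 (by omega)
        exact hne (Subtype.ext hz)
      obtain ⟨m, hmS, hmw, hmmin⟩ := exists_min hd S w.2
      have hmS' : m ∈ S' := hmemS' ⟨m, hmS⟩ (Or.inr hmmin)
      refine ⟨?_, ⟨m, hmS'⟩, ?_, ?_⟩
      · intro hcon
        exact hne (Subtype.ext (congrArg (fun z : {x // x ∈ S'} => z.1) hcon))
      · rcases hmw with rfl | hmw
        · exact hwa
        · exact prec_trans hmw hwa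
      · rcases hmw with rfl | hmw
        · exact hwb
        · exact prec_trans hmw hwb
  let p₁ : A → Prop := fun v => ∃ a : s, e v.1 = Sum.inl ↑a
  let g : {x : A // p₁ x} → s := fun x => x.2.choose
  have hg : ∀ x : {x : A // p₁ x}, e x.1.1 = Sum.inl ↑(g x) := fun x => x.2.choose_spec
  have hgbij : Function.Bijective g := by
    constructor
    · intro x y hxy
      have h1 : e x.1.1 = e y.1.1 := by rw [hg x, hg y, hxy]
      have h2 : x.1.1 = y.1.1 := e.toEquiv.injective h1
      exact Subtype.ext (Subtype.ext h2)
    · intro a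
      set v : {x // x ∈ S} := e.toEquiv.symm (Sum.inl ↑a) with hv0
      have hv : e v = Sum.inl ↑a := e.toEquiv.apply_symm_apply _
      have hk : keep v := Or.inl ⟨a, hv⟩
      refine ⟨⟨⟨v, hk⟩, ⟨a, hv⟩⟩, ?_⟩
      have hspec := hg ⟨⟨v, hk⟩, ⟨a, hv⟩⟩
      exact Subtype.ext (Sum.inl.inj (hspec.symm.trans hv))
  haveI : Fintype A := Fintype.ofFinite A
  haveI : Fintype {x : A // ¬ p₁ x} := Fintype.ofFinite _
  set k' : ℕ := Fintype.card {x : A // ¬ p₁ x} with hk'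
  let Φ : {x // x ∈ S'} ≃ (↑s ⊕ Fin k') :=
    e0.trans ((Equiv.sumCompl p₁).symm.trans
      (Equiv.sumCongr (Equiv.ofBijective g hgbij) (Fintype.equivFin _)))
  refine ⟨k', S', ⟨⟨Φ, ?_⟩⟩⟩
  intro x y
  by_cases h1 : p₁ (e0 x)
  · by_cases h2 : p₁ (e0 y)
    · have hx : Φ x = Sum.inl ↑(g ⟨e0 x, h1⟩) := by
        simp only [Φ, Equiv.trans_apply, Equiv.sumCompl_symm_apply_of_pos h1,
          Equiv.sumCongr_apply, Sum.map_inl, Equiv.ofBijective_apply]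
      have hy : Φ y = Sum.inl ↑(g ⟨e0 y, h2⟩) := by
        simp only [Φ, Equiv.trans_apply, Equiv.sumCompl_symm_apply_of_pos h2,
          Equiv.sumCongr_apply, Sum.map_inl, Equiv.ofBijective_apply]
      rw [hx, hy, addIsolated_adj_inl_inl, L1, ← e.map_rel_iff, hg ⟨e0 x, h1⟩,
        hg ⟨e0 y, h2⟩, addIsolated_adj_inl_inl]
      exact Iff.rfl
    · have hy : Φ y = Sum.inr ((Fintype.equivFin _) ⟨e0 y, h2⟩) := by
        simp only [Φ, Equiv.trans_apply, Equiv.sumCompl_symm_apply_of_neg h2,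
          Equiv.sumCongr_apply, Sum.map_inr]
      rw [hy]
      constructor
      · intro hadj
        exact absurd hadj.symm (addIsolated_adj_inr _ _ _ _)
      · intro hadj
        obtain ⟨hne, w, hwx, hwy⟩ := (compS_adj _ _ _).mp hadj
        rcases (e0 y).2 with hp | hdown
        · exact absurd hp h2
        · exact absurd hwy (hdown w.1 (hS'S w.2))
  · have hx : Φ x = Sum.inr ((Fintype.equivFin _) ⟨e0 x, h1⟩) := by
      simp only [Φ, Equiv.trans_apply, Equiv.sumCompl_symm_apply_of_neg h1,
        Equiv.sumCongr_apply, Sum.map_inr]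
    rw [hx]
    constructor
    · intro hadj
      exact absurd hadj (addIsolated_adj_inr _ _ _ _)
    · intro hadj
      obtain ⟨hne, w, hwx, hwy⟩ := (compS_adj _ _ _).mp hadj
      rcases (e0 x).2 with hp | hdown
      · exact absurd hp h1
      · exact absurd hwx (hdown w.1 (hS'S w.2))

lemma exists_pocDimLE {V : Type*} [Fintype V] (G : SimpleGraph V) : ∃ d, pocDimLE G d := by
  classical
  set n := Fintype.card V with hn
  set ι : V ≃ Fin n := Fintype.equivFin V with hι
  set f : V → (Fin n → ℝ) := fun v i => if i = ι v then -1 else 0 with hf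
  set wpt : V × V → (Fin n → ℝ) :=
    fun p i => if i = ι p.1 ∨ i = ι p.2 then -2 else -(1/2 : ℝ) with hwpt
  set S : Finset (Fin n → ℝ) :=
    (Finset.univ.image f) ∪
      ((Finset.univ.filter (fun p : V × V => G.Adj p.1 p.2)).image wpt) with hSdef
  -- basic order facts
  have flb : ∀ (v : V) (i), -1 ≤ f v i := by
    intro v i
    simp only [hf]
    split <;> norm_num
  have hwlb : ∀ (p : V × V) (i), -2 ≤ wpt p i := by
    intro p i
    simp only [hwpt]
    split <;> norm_num
  have hfvv : ∀ v : V, f v (ι v) = -1 := by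
    intro v
    simp [hf]
  have hwp1 : ∀ p : V × V, wpt p (ι p.1) = -2 := by
    intro p
    simp [hwpt]
  have F1 : ∀ u v : V, ¬ prec (f u) (f v) := by
    intro u v h
    have h1 := h (ι v)
    rw [hfvv v] at h1
    linarith [flb u (ι v)]
  have F2 : ∀ (u : V) (p : V × V), ¬ prec (f u) (wpt p) := by
    intro u p h
    have h1 := h (ι p.1)
    rw [hwp1 p] at h1
    linarith [flb u (ι p.1)]
  have F3 : ∀ (p q : V × V), ¬ prec (wpt p) (wpt q) := by
    intro p q h
    have h1 := h (ι q.1)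
    rw [hwp1 q] at h1
    linarith [hwlb p (ι q.1)]
  have F4 : ∀ (p : V × V) (v : V), prec (wpt p) (f v) ↔ v = p.1 ∨ v = p.2 := by
    intro p v
    constructor
    · intro h
      have h1 := h (ι v)
      rw [hfvv v] at h1
      by_cases hc : ι v = ι p.1 ∨ ι v = ι p.2
      · rcases hc with hc | hc
        · exact Or.inl (ι.injective hc)
        · exact Or.inr (ι.injective hc)
      · have h2 : wpt p (ι v) = -(1/2) := by
          simp only [hwpt]
          rw [if_neg hc]
        rw [h2] at h1
        linarith
    · intro h i
      by_cases hc : i = ι p.1 ∨ i = ι p.2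
      · have h2 : wpt p i = -2 := by
          simp only [hwpt]
          rw [if_pos hc]
        rw [h2]
        linarith [flb v i]
      · have h2 : wpt p i = -(1/2) := by
          simp only [hwpt]
          rw [if_neg hc]
        have hc2 : ¬ i = ι v := by
          intro hiv
          rcases h with rfl | rfl
          · exact hc (Or.inl hiv)
          · exact hc (Or.inr hiv)
        have h3 : f v i = 0 := by
          simp only [hf]
          rw [if_neg hc2]
        rw [h2, h3]
        norm_num
  have F5 : Function.Injective f := by
    intro u v huv
    have h1 := congrFun huv (ι u)
    rw [hfvv u] at h1
    by_cases hc : ι u = ι v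
    · exact ι.injective hc
    · have h2 : f v (ι u) = 0 := by
        simp only [hf]
        rw [if_neg hc]
      rw [h2] at h1
      norm_num at h1
  have hfS : ∀ v : V, f v ∈ S := by
    intro v
    exact Finset.mem_union_left _ (Finset.mem_image_of_mem f (Finset.mem_univ v))
  have hshape : ∀ {q : Fin n → ℝ}, q ∈ S →
      (∃ v, q = f v) ∨ (∃ p : V × V, G.Adj p.1 p.2 ∧ q = wpt p) := by
    intro q hq
    rcases Finset.mem_union.mp hq with hq | hq
    · obtain ⟨v, _, rfl⟩ := Finset.mem_image.mp hq
      exact Or.inl ⟨v, rfl⟩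
    · obtain ⟨p, hp, rfl⟩ := Finset.mem_image.mp hq
      exact Or.inr ⟨p, (Finset.mem_filter.mp hp).2, rfl⟩
  -- main adjacency fact
  have MAIN : ∀ u v : V, (compS S).Adj ⟨f u, hfS u⟩ ⟨f v, hfS v⟩ ↔ G.Adj u v := by
    intro u v
    rw [compS_adj]
    constructor
    · rintro ⟨hne, w, hwu, hwv⟩
      rcases hshape w.2 with ⟨x, hx⟩ | ⟨p, hadj, hp⟩
      · exact absurd (hx ▸ hwu) (F1 x u)
      · have hu := (F4 p u).mp (hp ▸ hwu)
        have hv := (F4 p v).mp (hp ▸ hwv)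
        have huv : u ≠ v := by
          intro h; exact hne (by simp [h])
        rcases hu with rfl | rfl <;> rcases hv with rfl | rfl
        · exact absurd rfl huv
        · exact hadj
        · exact hadj.symm
        · exact absurd rfl huv
    · intro hadj
      have hne : u ≠ v := hadj.ne
      have hwS : wpt (u, v) ∈ S := by
        refine Finset.mem_union_right _ (Finset.mem_image_of_mem wpt ?_)
        exact Finset.mem_filter.mpr ⟨Finset.mem_univ _, hadj⟩
      refine ⟨?_, ⟨wpt (u, v), hwS⟩, ?_, ?_⟩
      · intro h
        exact hne (F5 (congrArg Subtype.val h))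
      · exact (F4 (u, v) u).mpr (Or.inl rfl)
      · exact (F4 (u, v) v).mpr (Or.inr rfl)
  -- G is isomorphic to an induced subgraph of compS S
  set F : V → {x // x ∈ S} := fun v => ⟨f v, hfS v⟩ with hF
  have hFinj : Function.Injective F := by
    intro u v h
    exact F5 (congrArg Subtype.val h)
  set s' : Set {x // x ∈ S} := Set.range F with hs'
  haveI : Fintype ↥s' := Fintype.ofFinite _
  have h1 : pocDimLE (compS S) n := by
    refine ⟨0, S, ⟨⟨⟨Sum.inl, Sum.elim id Fin.elim0, fun a => rfl, ?_⟩, ?_⟩⟩⟩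
    · rintro (a | j)
      · rfl
      · exact j.elim0
    · intro a b
      exact addIsolated_adj_inl_inl _ _ _ _
  have h2 : pocDimLE (SimpleGraph.induce s' (compS S)) n := key _ s' h1
  have ψ : G ≃g SimpleGraph.induce s' (compS S) := by
    refine ⟨Equiv.ofInjective F hFinj, ?_⟩
    intro u v
    show (compS S).Adj (F u) (F v) ↔ G.Adj u v
    exact MAIN u v
  exact ⟨n, pocDimLE_of_iso ψ.symm h2⟩

/-- The partial order competition dimension of an induced subgraph is at
most that of the whole graph. -/
theorem stmt15 {V : Type*} [Fintype V] (G : SimpleGraph V) (s : Set V) [Fintype s] :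
    pocDim (SimpleGraph.induce s G) ≤ pocDim G := by
  classical
  obtain ⟨d₀, hd₀⟩ := exists_pocDimLE G
  have hne : {d | pocDimLE G d}.Nonempty := ⟨d₀, hd₀⟩
  have hmem : pocDimLE G (pocDim G) := Nat.sInf_mem hne
  exact Nat.sInf_le (key G s hmem)
end
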